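/- Let A be an n×n matrix over ℝ∪{−∞} with max-plus spectral radius λ > −∞. A vector x ∈ ℝⁿ satisfies max_{1≤i,j≤n}(A_{ij} + x_j − x_i) = λ if and only if there exists u ∈ ℝⁿ such that for every i: x_i = max over m = 0, 1, …, n−1 and over all sequences i = k_0, k_1, …, k_m in {1,…,n} of ( A_{k_0k_1} + ⋯ + A_{k_{m−1}k_m} − m·λ + u_{k_m} ), where for m = 0 the term is u_i. -/

import Mathlib

/-!
Max-plus semifield modeled as `WithBot ℝ` (= ℝ ∪ {−∞}).
The Kleene star of λ⁻¹A, i.e. of the matrix with entries −λ + A_{ij}, has (i,j) entry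
equal to the maximum over m = 0,…,n−1 and all sequences i = k_0, …, k_m = j of
A_{k_0k_1} + ⋯ + A_{k_{m−1}k_m} − m·λ, so that x = (λ⁻¹A)*u reads
x_i = max over such m, sequences and endpoints k_m of (weight − m·λ + u_{k_m}).
-/

/-- Max-plus matrix product: (A⊗B)_{ij} = max_k (A_{ik} + B_{kj}). -/
noncomputable def mmul {n : ℕ} (A B : Fin n → Fin n → WithBot ℝ) :
    Fin n → Fin n → WithBot ℝ :=
  fun i j => Finset.univ.sup fun k => A i k + B k j

/-- Max-plus matrix powers, with A⁰ = I (0 on the diagonal, −∞ elsewhere). -/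
noncomputable def mpow {n : ℕ} (A : Fin n → Fin n → WithBot ℝ) :
    ℕ → Fin n → Fin n → WithBot ℝ
  | 0 => fun i j => if i = j then (0 : WithBot ℝ) else ⊥
  | m + 1 => mmul (mpow A m) A

/-- Kleene star: (A*)_{ij} = max_{0 ≤ m ≤ n−1} (A^m)_{ij}. -/
noncomputable def mstar {n : ℕ} (A : Fin n → Fin n → WithBot ℝ) :
    Fin n → Fin n → WithBot ℝ :=
  fun i j => (Finset.range n).sup fun m => mpow A m i j

/-- Max-plus spectral radius (maximum cycle mean):
λ = max_{1 ≤ m ≤ n} (1/m)·max_i (A^m)_{ii}, computed in ℝ ∪ {−∞}. -/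
noncomputable def specRad {n : ℕ} (A : Fin n → Fin n → WithBot ℝ) : WithBot ℝ :=
  (Finset.Icc 1 n).sup fun m =>
    WithBot.map (fun r => r / (m : ℝ)) (Finset.univ.sup fun i => mpow A m i i)

lemma sup_add_const {α : Type*} (s : Finset α) (f : α → WithBot ℝ) (c : WithBot ℝ) :
    s.sup f + c = s.sup fun a => f a + c := by
  have hmono : Monotone (fun x : WithBot ℝ => x + c) := fun a b h => add_le_add_left h c
  exact Finset.comp_sup_eq_sup_comp (fun x : WithBot ℝ => x + c) (fun x y => hmono.map_sup x y) (WithBot.bot_add c)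

lemma const_add_sup {α : Type*} (s : Finset α) (f : α → WithBot ℝ) (c : WithBot ℝ) :
    c + s.sup f = s.sup fun a => c + f a := by
  have hmono : Monotone (fun x : WithBot ℝ => c + x) := fun a b h => add_le_add_right h c
  exact Finset.comp_sup_eq_sup_comp (fun x : WithBot ℝ => c + x) (fun x y => hmono.map_sup x y) (WithBot.add_bot c)

lemma add_coe_le_coe_iff (a : WithBot ℝ) (r s : ℝ) :
    a + (r : WithBot ℝ) ≤ (s : WithBot ℝ) ↔ a ≤ ((s - r : ℝ) : WithBot ℝ) := by
  cases a with
  | bot => simp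
  | coe a =>
    rw [← WithBot.coe_add, WithBot.coe_le_coe, WithBot.coe_le_coe]
    constructor <;> intro <;> linarith

/-- weight of the path c 0, c 1, ..., c p -/
noncomputable def pweight {n : ℕ} (M : Fin n → Fin n → WithBot ℝ) (p : ℕ) (c : ℕ → Fin n) :
    WithBot ℝ :=
  ∑ t ∈ Finset.range p, M (c t) (c (t + 1))

lemma pweight_le_mpow {n : ℕ} (M : Fin n → Fin n → WithBot ℝ) :
    ∀ (p : ℕ) (c : ℕ → Fin n), pweight M p c ≤ mpow M p (c 0) (c p) := by
  intro p
  induction p with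
  | zero => intro c; simp [pweight, mpow]
  | succ p ih =>
    intro c
    have h1 : pweight M (p + 1) c = pweight M p c + M (c p) (c (p + 1)) := by
      simp [pweight, Finset.sum_range_succ]
    rw [h1]
    calc pweight M p c + M (c p) (c (p + 1))
        ≤ mpow M p (c 0) (c p) + M (c p) (c (p + 1)) := add_le_add_left (ih c) _
      _ ≤ mpow M (p + 1) (c 0) (c (p + 1)) := by
          show _ ≤ mmul (mpow M p) M (c 0) (c (p+1))
          exact Finset.le_sup (f := fun k => mpow M p (c 0) k + M k (c (p+1))) (Finset.mem_univ (c p))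

lemma mpow_eq_pweight {n : ℕ} (M : Fin n → Fin n → WithBot ℝ) :
    ∀ (p : ℕ) (i j : Fin n), mpow M p i j = ⊥ ∨
      ∃ c : ℕ → Fin n, c 0 = i ∧ c p = j ∧ mpow M p i j = pweight M p c := by
  intro p
  induction p with
  | zero =>
    intro i j
    by_cases h : i = j
    · exact Or.inr ⟨fun _ => i, rfl, by simp [h], by simp [mpow, h, pweight]⟩
    · exact Or.inl (by simp [mpow, h])
  | succ p ih =>
    intro i j
    have hne : (Finset.univ : Finset (Fin n)).Nonempty := ⟨i, Finset.mem_univ i⟩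
    obtain ⟨k, _, hk⟩ := Finset.exists_mem_eq_sup Finset.univ hne
      (fun k => mpow M p i k + M k j)
    have hpow : mpow M (p + 1) i j = mpow M p i k + M k j := hk
    rcases ih i k with hbot | ⟨c, hc0, hcp, hcw⟩
    · exact Or.inl (by rw [hpow, hbot, WithBot.bot_add])
    · refine Or.inr ⟨fun t => if t ≤ p then c t else j, by simp [hc0], by simp, ?_⟩
      have hw : pweight M (p + 1) (fun t => if t ≤ p then c t else j)
          = pweight M p c + M k j := by
        rw [pweight, Finset.sum_range_succ]
        congr 1
        · apply Finset.sum_congr rfl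
          intro t ht
          have ht' : t + 1 ≤ p := Finset.mem_range.mp ht
          simp [ht', Nat.le_of_succ_le ht']
        · simp [hcp]
      rw [hpow, hw, hcw]

lemma mpow_n_le_mstar {n : ℕ} (M : Fin n → Fin n → WithBot ℝ)
    (hcyc : ∀ m, 1 ≤ m → m ≤ n → ∀ i, mpow M m i i ≤ 0) (i j : Fin n) :
    mpow M n i j ≤ mstar M i j := by
  have hn : 0 < n := i.pos
  rcases mpow_eq_pweight M n i j with hbot | ⟨c, hc0, hcn, hcw⟩
  · simp [hbot]
  -- pigeonhole: two equal vertices among c 0, ..., c n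
  have hcard : Fintype.card (Fin n) < Fintype.card (Fin (n + 1)) := by simp
  obtain ⟨s, t, hst, hcst⟩ :=
    Fintype.exists_ne_map_eq_of_card_lt (fun t : Fin (n + 1) => c t.val) hcard
  -- wlog a < b
  obtain ⟨a, b, hab, hb, hcab⟩ : ∃ a b : ℕ, a < b ∧ b ≤ n ∧ c a = c b := by
    rcases lt_or_gt_of_ne (fun h => hst (Fin.ext h)) with h | h
    · exact ⟨s.val, t.val, h, Nat.lt_succ_iff.mp t.isLt, hcst⟩
    · exact ⟨t.val, s.val, h, Nat.lt_succ_iff.mp s.isLt, hcst.symm⟩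
  set d : ℕ := b - a with hd
  have hd1 : 1 ≤ d := Nat.le_sub_of_add_le (by omega)
  have hadb : a + d = b := by omega
  have hdn : d ≤ n := by omega
  have hand : a ≤ n - d := by omega
  -- splice path
  set c' : ℕ → Fin n := fun t => if t ≤ a then c t else c (t + d) with hc'
  -- decompose weight of c
  set f : ℕ → WithBot ℝ := fun t => M (c t) (c (t + 1)) with hf
  have hsplit : pweight M n c
      = (∑ t ∈ Finset.Ico 0 a, f t) + (∑ t ∈ Finset.Ico a b, f t) + (∑ t ∈ Finset.Ico b n, f t) := by
    rw [pweight, Finset.range_eq_Ico,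
      ← Finset.sum_Ico_consecutive f (Nat.zero_le b) (by omega : b ≤ n),
      ← Finset.sum_Ico_consecutive f (Nat.zero_le a) (le_of_lt hab)]
  -- middle part is a cycle of length d at c a
  have hcycle : (∑ t ∈ Finset.Ico a b, f t) ≤ 0 := by
    have h1 : (∑ t ∈ Finset.Ico a b, f t) = pweight M d (fun s => c (a + s)) := by
      rw [Finset.sum_Ico_eq_sum_range, pweight]
      apply Finset.sum_congr rfl
      intro t _
      simp only [hf]
      have e : a + t + 1 = a + (t + 1) := by omega
      rw [e]
    rw [h1]
    calc pweight M d (fun s => c (a + s)) ≤ mpow M d (c (a + 0)) (c (a + d)) :=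
          pweight_le_mpow M d _
      _ ≤ 0 := by
          rw [Nat.add_zero, hadb, ← hcab]
          exact hcyc d hd1 hdn (c a)
  -- spliced weight
  have hsplice : pweight M (n - d) c'
      = (∑ t ∈ Finset.Ico 0 a, f t) + (∑ t ∈ Finset.Ico b n, f t) := by
    rw [pweight, Finset.range_eq_Ico,
      ← Finset.sum_Ico_consecutive _ (Nat.zero_le a) hand]
    congr 1
    · apply Finset.sum_congr rfl
      intro t ht
      have ht' : t < a := by
        have := Finset.mem_Ico.mp ht; omega
      simp only [hc', hf]
      rw [if_pos (by omega : t ≤ a), if_pos (by omega : t + 1 ≤ a)]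
    · rw [Finset.sum_Ico_eq_sum_range, Finset.sum_Ico_eq_sum_range]
      have hlen : n - d - a = n - b := by omega
      rw [hlen]
      apply Finset.sum_congr rfl
      intro t _
      simp only [hc', hf]
      have e2 : ¬ (a + t + 1 ≤ a) := by omega
      rw [if_neg e2]
      by_cases h0 : t = 0
      · subst h0
        rw [if_pos (by omega : a + 0 ≤ a)]
        have e1 : a + 0 + 1 + d = b + 0 + 1 := by omega
        have e2 : a + 0 = a := rfl
        rw [e1, e2, hcab]
        simp only [Nat.add_zero]
      · rw [if_neg (by omega : ¬ a + t ≤ a)]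
        have e1 : a + t + d = b + t := by omega
        have e2 : a + t + 1 + d = b + t + 1 := by omega
        rw [e1, e2]
  -- endpoints of c'
  have he0 : c' 0 = i := by
    simp only [hc']
    rw [if_pos (Nat.zero_le a)]; exact hc0
  have heN : c' (n - d) = j := by
    simp only [hc']
    by_cases h : n - d ≤ a
    · have h1 : n - d = a := le_antisymm h hand
      have h2 : b = n := by omega
      rw [if_pos h, h1, hcab, h2]; exact hcn
    · rw [if_neg h]
      have : n - d + d = n := by omega
      rw [this]; exact hcn
  -- conclude
  have h1 : pweight M n c ≤ pweight M (n - d) c' := by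
    rw [hsplit, hsplice]
    calc (∑ t ∈ Finset.Ico 0 a, f t) + (∑ t ∈ Finset.Ico a b, f t) + (∑ t ∈ Finset.Ico b n, f t)
        = (∑ t ∈ Finset.Ico 0 a, f t) + (∑ t ∈ Finset.Ico b n, f t) + (∑ t ∈ Finset.Ico a b, f t) := by
          rw [add_right_comm]
      _ ≤ (∑ t ∈ Finset.Ico 0 a, f t) + (∑ t ∈ Finset.Ico b n, f t) + 0 :=
          add_le_add_right hcycle _
      _ = _ := by rw [add_zero]
  calc mpow M n i j = pweight M n c := hcw
    _ ≤ pweight M (n - d) c' := h1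
    _ ≤ mpow M (n - d) (c' 0) (c' (n - d)) := pweight_le_mpow M _ _
    _ = mpow M (n - d) i j := by rw [he0, heN]
    _ ≤ mstar M i j := by
        show _ ≤ (Finset.range n).sup fun m => mpow M m i j
        exact Finset.le_sup (f := fun m => mpow M m i j)
          (Finset.mem_range.mpr (by omega : n - d < n))

lemma mul_mpow_le {n : ℕ} (M : Fin n → Fin n → WithBot ℝ) :
    ∀ (m : ℕ) (i j k : Fin n), M i j + mpow M m j k ≤ mpow M (m + 1) i k := by
  intro m
  induction m with
  | zero =>
    intro i j k
    by_cases h : j = k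
    · subst h
      have h1 : M i j + mpow M 0 j j = mpow M 0 i i + M i j := by
        simp [mpow]
      rw [h1]
      exact Finset.le_sup (f := fun t => mpow M 0 i t + M t j) (Finset.mem_univ i)
    · simp [mpow, h]
  | succ m ih =>
    intro i j k
    show M i j + mmul (mpow M m) M j k ≤ mmul (mpow M (m + 1)) M i k
    rw [mmul, const_add_sup]
    apply Finset.sup_le
    intro t _
    calc M i j + (mpow M m j t + M t k)
        = (M i j + mpow M m j t) + M t k := (add_assoc _ _ _).symm
      _ ≤ mpow M (m + 1) i t + M t k := add_le_add_left (ih i j t) _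
      _ ≤ _ := Finset.le_sup (f := fun t => mpow M (m + 1) i t + M t k) (Finset.mem_univ t)

lemma mpow_shift {n : ℕ} (A : Fin n → Fin n → WithBot ℝ) (l : ℝ) :
    ∀ (m : ℕ) (i j : Fin n),
      mpow (fun a b => ((-l : ℝ) : WithBot ℝ) + A a b) m i j
        = ((-((m : ℝ) * l) : ℝ) : WithBot ℝ) + mpow A m i j := by
  intro m
  induction m with
  | zero =>
    intro i j
    by_cases h : i = j <;> simp [mpow, h]
  | succ m ih =>
    intro i j
    show mmul _ _ i j = _
    rw [mmul]
    have key : ∀ k : Fin n,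
        mpow (fun a b => ((-l : ℝ) : WithBot ℝ) + A a b) m i k
          + (((-l : ℝ) : WithBot ℝ) + A k j)
        = ((-(((m + 1 : ℕ) : ℝ) * l) : ℝ) : WithBot ℝ) + (mpow A m i k + A k j) := by
      intro k
      rw [ih]
      cases mpow A m i k with
      | bot => simp
      | coe a =>
        cases A k j with
        | bot => simp
        | coe b =>
          rw [← WithBot.coe_add, ← WithBot.coe_add, ← WithBot.coe_add, ← WithBot.coe_add,
            ← WithBot.coe_add]
          rw [WithBot.coe_eq_coe]
          push_cast
          ring
    simp only [key]
    rw [← const_add_sup]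
    rfl

lemma mpow_telescope {n : ℕ} (A : Fin n → Fin n → WithBot ℝ) (x : Fin n → ℝ) (g : ℝ)
    (hA : ∀ k j, A k j + ((x j : ℝ) : WithBot ℝ) ≤ ((g + x k : ℝ) : WithBot ℝ)) :
    ∀ (m : ℕ) (i j : Fin n), mpow A m i j + ((x j : ℝ) : WithBot ℝ)
      ≤ (((m : ℝ) * g + x i : ℝ) : WithBot ℝ) := by
  intro m
  induction m with
  | zero =>
    intro i j
    by_cases h : i = j
    · subst h
      simp [mpow]
    · simp [mpow, h]
  | succ m ih =>
    intro i j
    show mmul (mpow A m) A i j + _ ≤ _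
    rw [mmul, sup_add_const]
    apply Finset.sup_le
    intro k _
    calc mpow A m i k + A k j + ((x j : ℝ) : WithBot ℝ)
        = mpow A m i k + (A k j + ((x j : ℝ) : WithBot ℝ)) := add_assoc _ _ _
      _ ≤ mpow A m i k + ((g + x k : ℝ) : WithBot ℝ) := add_le_add_right (hA k j) _
      _ = mpow A m i k + ((x k : ℝ) : WithBot ℝ) + ((g : ℝ) : WithBot ℝ) := by
          rw [add_assoc, ← WithBot.coe_add]
          congr 2
          ring
      _ ≤ (((m : ℝ) * g + x i : ℝ) : WithBot ℝ) + ((g : ℝ) : WithBot ℝ) :=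
          add_le_add_left (ih i k) _
      _ = ((((m + 1 : ℕ) : ℝ) * g + x i : ℝ) : WithBot ℝ) := by
          rw [← WithBot.coe_add, WithBot.coe_eq_coe]
          push_cast
          ring

lemma mpow_fix {n : ℕ} (M : Fin n → Fin n → WithBot ℝ) (x : Fin n → ℝ)
    (hM : ∀ i j, M i j + ((x j : ℝ) : WithBot ℝ) ≤ ((x i : ℝ) : WithBot ℝ)) :
    ∀ (m : ℕ) (i j : Fin n),
      mpow M m i j + ((x j : ℝ) : WithBot ℝ) ≤ ((x i : ℝ) : WithBot ℝ) := by
  intro m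
  induction m with
  | zero =>
    intro i j
    by_cases h : i = j
    · subst h; simp [mpow]
    · simp [mpow, h]
  | succ m ih =>
    intro i j
    show mmul (mpow M m) M i j + _ ≤ _
    rw [mmul, sup_add_const]
    apply Finset.sup_le
    intro k _
    calc mpow M m i k + M k j + ((x j : ℝ) : WithBot ℝ)
        = mpow M m i k + (M k j + ((x j : ℝ) : WithBot ℝ)) := add_assoc _ _ _
      _ ≤ mpow M m i k + ((x k : ℝ) : WithBot ℝ) := add_le_add_right (hM k j) _
      _ ≤ _ := ih i k

lemma mpow_all_bot {n : ℕ} (A : Fin n → Fin n → WithBot ℝ)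
    (hA : ∀ i j, A i j = ⊥) : ∀ m, 1 ≤ m → ∀ i j : Fin n, mpow A m i j = ⊥ := by
  intro m hm i j
  cases m with
  | zero => omega
  | succ m =>
    show mmul (mpow A m) A i j = ⊥
    rw [mmul]
    refine le_bot_iff.mp (Finset.sup_le fun k _ => ?_)
    rw [hA k j]
    simp


/-- All minimizers of G(x) = max_{i,j}(A_{ij} + x_j − x_i): G(x) = λ iff
x = (λ⁻¹A)*u for some u ∈ ℝⁿ. -/
theorem stmt_17 {n : ℕ} (A : Fin n → Fin n → WithBot ℝ) (l : ℝ)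
    (hl : ((l : ℝ) : WithBot ℝ) = specRad A) (x : Fin n → ℝ) :
    (Finset.univ.sup fun i => Finset.univ.sup fun j =>
        A i j + ((x j - x i : ℝ) : WithBot ℝ)) = ((l : ℝ) : WithBot ℝ) ↔
      ∃ u : Fin n → ℝ, ∀ i,
        ((x i : ℝ) : WithBot ℝ) =
          Finset.univ.sup fun j =>
            mstar (fun a b => ((-l : ℝ) : WithBot ℝ) + A a b) i j +
              ((u j : ℝ) : WithBot ℝ) := by
  set M : Fin n → Fin n → WithBot ℝ := fun a b => ((-l : ℝ) : WithBot ℝ) + A a b with hM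
  have hn : 0 < n := by
    rcases Nat.eq_zero_or_pos n with h | h
    · subst h
      rw [specRad] at hl
      simp at hl
    · exact h
  -- each A i j + (x j - x i) bounded by the big sup
  have hterm_le : ∀ (i j : Fin n), A i j + ((x j - x i : ℝ) : WithBot ℝ)
      ≤ Finset.univ.sup fun i => Finset.univ.sup fun j =>
          A i j + ((x j - x i : ℝ) : WithBot ℝ) := fun i j =>
    le_trans
      (Finset.le_sup (f := fun j => A i j + ((x j - x i : ℝ) : WithBot ℝ))
        (Finset.mem_univ j))
      (Finset.le_sup (f := fun i => Finset.univ.sup fun j =>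
        A i j + ((x j - x i : ℝ) : WithBot ℝ)) (Finset.mem_univ i))
  -- spectral radius bound on cycles of A
  have hspec : ∀ m, 1 ≤ m → m ≤ n → ∀ i,
      mpow A m i i ≤ (((m : ℝ) * l : ℝ) : WithBot ℝ) := by
    intro m h1 h2 i
    have hterm : WithBot.map (fun r => r / (m : ℝ))
        (Finset.univ.sup fun i => mpow A m i i) ≤ ((l : ℝ) : WithBot ℝ) := by
      rw [hl, specRad]
      exact Finset.le_sup (f := fun m : ℕ => WithBot.map (fun r => r / (m : ℝ))
        (Finset.univ.sup fun i => mpow A m i i)) (Finset.mem_Icc.mpr ⟨h1, h2⟩)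
    have hle : mpow A m i i ≤ Finset.univ.sup fun i => mpow A m i i :=
      Finset.le_sup (f := fun i => mpow A m i i) (Finset.mem_univ i)
    cases hS : (Finset.univ.sup fun i => mpow A m i i) with
    | bot => rw [hS] at hle; exact le_trans hle bot_le
    | coe s =>
      rw [hS] at hle hterm
      rw [WithBot.map_coe, WithBot.coe_le_coe] at hterm
      refine le_trans hle (WithBot.coe_le_coe.mpr ?_)
      have hm0 : (0 : ℝ) < (m : ℝ) := by exact_mod_cast h1
      have := (div_le_iff₀ hm0).mp hterm
      linarith [this]
  -- cycles of M have nonpositive weight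
  have hcycB : ∀ m, 1 ≤ m → m ≤ n → ∀ i, mpow M m i i ≤ 0 := by
    intro m h1 h2 i
    rw [hM, mpow_shift]
    calc ((-((m : ℝ) * l) : ℝ) : WithBot ℝ) + mpow A m i i
        ≤ ((-((m : ℝ) * l) : ℝ) : WithBot ℝ) + (((m : ℝ) * l : ℝ) : WithBot ℝ) :=
          add_le_add_right (hspec m h1 h2 i) _
      _ = 0 := by
          rw [← WithBot.coe_add]
          have : (-((m : ℝ) * l) + (m : ℝ) * l) = 0 := by ring
          rw [this, WithBot.coe_zero]
  -- a critical cycle exists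
  have hcrit : ∃ m i, 1 ≤ m ∧ m ≤ n ∧
      mpow A m i i = (((m : ℝ) * l : ℝ) : WithBot ℝ) := by
    have hne : (Finset.Icc 1 n).Nonempty := ⟨1, Finset.mem_Icc.mpr ⟨le_refl 1, hn⟩⟩
    obtain ⟨m, hm, hms⟩ := Finset.exists_mem_eq_sup (Finset.Icc 1 n) hne
      (fun m => WithBot.map (fun r => r / (m : ℝ)) (Finset.univ.sup fun i => mpow A m i i))
    rw [Finset.mem_Icc] at hm
    have heq : ((l : ℝ) : WithBot ℝ)
        = WithBot.map (fun r => r / (m : ℝ)) (Finset.univ.sup fun i => mpow A m i i) := by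
      rw [hl, specRad]; exact hms
    cases hS : (Finset.univ.sup fun i => mpow A m i i) with
    | bot => rw [hS] at heq; simp at heq
    | coe s =>
      rw [hS, WithBot.map_coe, WithBot.coe_eq_coe] at heq
      obtain ⟨i, _, hi⟩ := Finset.exists_mem_eq_sup Finset.univ
        ⟨⟨0, hn⟩, Finset.mem_univ _⟩ (fun i => mpow A m i i)
      refine ⟨m, i, hm.1, hm.2, ?_⟩
      have hm0 : ((m : ℝ)) ≠ 0 := by
        have : (0 : ℝ) < (m : ℝ) := by exact_mod_cast hm.1
        linarith
      have hs : s = (m : ℝ) * l := by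
        have := (div_eq_iff hm0).mp heq.symm
        linarith [this]
      rw [← hi, hS, hs]
  -- l ≤ G always (for real x)
  have hge : ((l : ℝ) : WithBot ℝ) ≤ Finset.univ.sup fun i => Finset.univ.sup fun j =>
      A i j + ((x j - x i : ℝ) : WithBot ℝ) := by
    obtain ⟨m, i0, hm1, hm2, hmi⟩ := hcrit
    cases hG : (Finset.univ.sup fun i => Finset.univ.sup fun j =>
        A i j + ((x j - x i : ℝ) : WithBot ℝ)) with
    | bot =>
      exfalso
      have hbot : ∀ i j, A i j = ⊥ := by
        intro i j
        have h1 : A i j + ((x j - x i : ℝ) : WithBot ℝ) ≤ ⊥ := by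
          rw [← hG]; exact hterm_le i j
        cases hA' : A i j with
        | bot => rfl
        | coe a => rw [hA', ← WithBot.coe_add] at h1; simp at h1
      have hb := mpow_all_bot A hbot m hm1 i0 i0
      rw [hb] at hmi
      exact WithBot.bot_ne_coe hmi
    | coe g =>
      rw [WithBot.coe_le_coe]
      have hA : ∀ k j, A k j + ((x j : ℝ) : WithBot ℝ) ≤ ((g + x k : ℝ) : WithBot ℝ) := by
        intro k j
        have h1 : A k j + ((x j - x k : ℝ) : WithBot ℝ) ≤ ((g : ℝ) : WithBot ℝ) := by
          rw [← hG]; exact hterm_le k j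
        cases hA' : A k j with
        | bot => simp
        | coe a =>
          rw [hA', ← WithBot.coe_add, WithBot.coe_le_coe] at h1
          rw [← WithBot.coe_add, WithBot.coe_le_coe]
          linarith
      have ht := mpow_telescope A x g hA m i0 i0
      rw [hmi, ← WithBot.coe_add, WithBot.coe_le_coe] at ht
      have hm0 : (0 : ℝ) < (m : ℝ) := by exact_mod_cast hm1
      nlinarith [ht, hm0]
  constructor
  · -- forward
    intro hG
    refine ⟨x, fun i => ?_⟩
    have hBx : ∀ i j, M i j + ((x j : ℝ) : WithBot ℝ) ≤ ((x i : ℝ) : WithBot ℝ) := by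
      intro i j
      have h1 : A i j + ((x j - x i : ℝ) : WithBot ℝ) ≤ ((l : ℝ) : WithBot ℝ) := by
        rw [← hG]; exact hterm_le i j
      simp only [hM]
      cases hA' : A i j with
      | bot => simp
      | coe a =>
        rw [hA', ← WithBot.coe_add, WithBot.coe_le_coe] at h1
        rw [← WithBot.coe_add, ← WithBot.coe_add, WithBot.coe_le_coe]
        linarith
    have hfix := mpow_fix M x hBx
    apply le_antisymm
    · have h0 : (0 : WithBot ℝ) ≤ mstar M i i := by
        have he : mpow M 0 i i = 0 := by simp [mpow]
        rw [← he]
        exact Finset.le_sup (f := fun m => mpow M m i i) (Finset.mem_range.mpr hn)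
      calc ((x i : ℝ) : WithBot ℝ) = 0 + ((x i : ℝ) : WithBot ℝ) := (zero_add _).symm
        _ ≤ mstar M i i + ((x i : ℝ) : WithBot ℝ) := add_le_add_left h0 _
        _ ≤ _ := Finset.le_sup (f := fun j => mstar M i j + ((x j : ℝ) : WithBot ℝ))
            (Finset.mem_univ i)
    · apply Finset.sup_le
      intro j _
      show ((Finset.range n).sup fun m => mpow M m i j) + _ ≤ _
      rw [sup_add_const]
      apply Finset.sup_le
      intro m _
      exact hfix m i j
  · -- backward
    rintro ⟨u, hu⟩
    refine le_antisymm ?_ hge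
    have hstar : ∀ i j, M i j + ((x j : ℝ) : WithBot ℝ) ≤ ((x i : ℝ) : WithBot ℝ) := by
      intro i j
      rw [hu j, hu i, const_add_sup]
      apply Finset.sup_le
      intro k _
      have h1 : M i j + mstar M j k ≤ mstar M i k := by
        show M i j + ((Finset.range n).sup fun m => mpow M m j k) ≤ _
        rw [const_add_sup]
        apply Finset.sup_le
        intro m hm
        rw [Finset.mem_range] at hm
        have h2 : M i j + mpow M m j k ≤ mpow M (m + 1) i k := mul_mpow_le M m i j k
        rcases Nat.lt_or_ge (m + 1) n with h | h
        · exact le_trans h2 (Finset.le_sup (f := fun m => mpow M m i k)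
            (Finset.mem_range.mpr h))
        · have hmn : m + 1 = n := by omega
          refine le_trans h2 ?_
          rw [hmn]
          exact mpow_n_le_mstar M hcycB i k
      calc M i j + (mstar M j k + ((u k : ℝ) : WithBot ℝ))
          = (M i j + mstar M j k) + ((u k : ℝ) : WithBot ℝ) := (add_assoc _ _ _).symm
        _ ≤ mstar M i k + ((u k : ℝ) : WithBot ℝ) := add_le_add_left h1 _
        _ ≤ _ := Finset.le_sup (f := fun k => mstar M i k + ((u k : ℝ) : WithBot ℝ))
            (Finset.mem_univ k)
    apply Finset.sup_le
    intro i _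
    apply Finset.sup_le
    intro j _
    have h1 := hstar i j
    simp only [hM] at h1
    cases hA' : A i j with
    | bot => simp
    | coe a =>
      rw [hA'] at h1
      rw [← WithBot.coe_add, ← WithBot.coe_add, WithBot.coe_le_coe] at h1
      rw [← WithBot.coe_add, WithBot.coe_le_coe]
      linarith
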